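/- For all λ ∈ (0,1) and k ∈ (0,1) satisfying 1 − λ²k² < 2(1−λ²), the sequence a_j = ((2j−1)!!/(2^{j+1}(j+1)!)) (1−k²)^{j+1} ∫₀^λ t^{2j+2}/(1−t²)^{j+1} dt (for j ≥ 0) is nonincreasing in j, i.e. a_{j+1} ≤ a_j for all j ≥ 0. -/

import Mathlib

open scoped Nat

lemma df_step' (j : ℕ) : ((2 * (j+1) - 1)‼ : ℕ) = (2*j+1) * (2*j - 1)‼ := by
  cases j with
  | zero => simp [Nat.doubleFactorial]
  | succ n =>
    have h1 : 2*(n+1+1)-1 = (2*n+1)+2 := by omega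
    have h2 : 2*(n+1)-1 = 2*n+1 := by omega
    rw [h1, h2, Nat.doubleFactorial_add_two]
    congr 1

theorem a_seq_nonincreasing (lam k : ℝ) (hlam : lam ∈ Set.Ioo (0:ℝ) 1)
    (hk : k ∈ Set.Ioo (0:ℝ) 1) (hcond : 1 - lam ^ 2 * k ^ 2 < 2 * (1 - lam ^ 2))
    (a : ℕ → ℝ)
    (ha : ∀ j : ℕ, a j = ((2 * j - 1)‼ : ℝ) / (2 ^ (j + 1) * ((j + 1)! : ℝ)) *
      (1 - k ^ 2) ^ (j + 1) * ∫ t in (0:ℝ)..lam, t ^ (2 * j + 2) / (1 - t ^ 2) ^ (j + 1)) :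
    ∀ j : ℕ, a (j + 1) ≤ a j := by
  obtain ⟨hl0, hl1⟩ := hlam
  obtain ⟨hk0, hk1⟩ := hk
  intro j
  have hl2 : (0:ℝ) < 1 - lam^2 := by nlinarith
  have hk2 : (0:ℝ) < 1 - k^2 := by nlinarith
  have hkey : lam^2 * (1 - k^2) ≤ 1 - lam^2 := by nlinarith
  have hden : ∀ t ∈ Set.Icc (0:ℝ) lam, (0:ℝ) < 1 - t^2 := by
    rintro t ⟨h1, h2⟩; nlinarith
  have huIcc : Set.uIcc (0:ℝ) lam = Set.Icc 0 lam := Set.uIcc_of_le hl0.le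
  have hcont : ∀ n : ℕ, ContinuousOn (fun t : ℝ => t ^ (2*n+2) / (1 - t^2) ^ (n+1))
      (Set.Icc 0 lam) := by
    intro n
    apply ContinuousOn.div (by fun_prop) (by fun_prop)
    intro t ht
    exact pow_ne_zero _ (ne_of_gt (hden t ht))
  have hint : ∀ n : ℕ, IntervalIntegrable (fun t : ℝ => t ^ (2*n+2) / (1 - t^2) ^ (n+1))
      MeasureTheory.volume 0 lam := by
    intro n
    exact ContinuousOn.intervalIntegrable (huIcc ▸ hcont n)
  have hnn : ∀ n : ℕ, ∀ t ∈ Set.Icc (0:ℝ) lam,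
      (0:ℝ) ≤ t ^ (2*n+2) / (1 - t^2) ^ (n+1) := by
    intro n t ht
    exact div_nonneg (pow_nonneg ht.1 _) (pow_nonneg (hden t ht).le _)
  set c : ℝ := lam^2 / (1 - lam^2) with hc
  have hc0 : 0 ≤ c := div_nonneg (sq_nonneg lam) hl2.le
  have hpt : ∀ t ∈ Set.Icc (0:ℝ) lam,
      t ^ (2*(j+1)+2) / (1 - t^2) ^ ((j+1)+1)
        ≤ c * (t ^ (2*j+2) / (1 - t^2) ^ (j+1)) := by
    intro t ht
    have h1 := hden t ht
    have heq : t ^ (2*(j+1)+2) / (1 - t^2) ^ ((j+1)+1)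
        = (t^2 / (1 - t^2)) * (t ^ (2*j+2) / (1 - t^2) ^ (j+1)) := by
      field_simp
      ring
    rw [heq]
    apply mul_le_mul_of_nonneg_right _ (hnn j t ht)
    apply div_le_div₀ (sq_nonneg lam) _ hl2 _
    · nlinarith [ht.1, ht.2]
    · nlinarith [ht.1, ht.2]
  have hI : (0:ℝ) ≤ ∫ t in (0:ℝ)..lam, t ^ (2*j+2) / (1 - t^2) ^ (j+1) :=
    intervalIntegral.integral_nonneg hl0.le (hnn j)
  have hInt : (∫ t in (0:ℝ)..lam, t ^ (2*(j+1)+2) / (1 - t^2) ^ ((j+1)+1))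
      ≤ c * ∫ t in (0:ℝ)..lam, t ^ (2*j+2) / (1 - t^2) ^ (j+1) := by
    rw [← intervalIntegral.integral_const_mul]
    exact intervalIntegral.integral_mono_on hl0.le (hint (j+1)) ((hint j).const_mul c) hpt
  -- notation
  set D : ℝ := ((2*j - 1)‼ : ℝ) with hD
  have hD0 : (0:ℝ) < D := Nat.cast_pos.mpr (Nat.doubleFactorial_pos _)
  set F : ℝ := ((j+1)! : ℝ) with hF
  have hF0 : (0:ℝ) < F := Nat.cast_pos.mpr (Nat.factorial_pos _)
  have hdf : ((2*(j+1) - 1)‼ : ℝ) = (2*(j:ℝ)+1) * D := by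
    rw [hD, df_step']
    push_cast
    ring
  have hfac : (((j+1)+1)! : ℝ) = ((j:ℝ)+2) * F := by
    rw [hF, Nat.factorial_succ]
    push_cast
    ring
  rw [ha (j+1), ha j, hdf, hfac]
  have hcoefpos : (0:ℝ) ≤ (2*(j:ℝ)+1) * D / (2 ^ ((j+1)+1) * (((j:ℝ)+2) * F))
      * (1 - k^2)^((j+1)+1) := by positivity
  calc (2*(j:ℝ)+1) * D / (2 ^ ((j+1)+1) * (((j:ℝ)+2) * F)) * (1 - k^2)^((j+1)+1)
        * ∫ t in (0:ℝ)..lam, t ^ (2*(j+1)+2) / (1 - t^2) ^ ((j+1)+1)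
      ≤ (2*(j:ℝ)+1) * D / (2 ^ ((j+1)+1) * (((j:ℝ)+2) * F)) * (1 - k^2)^((j+1)+1)
        * (c * ∫ t in (0:ℝ)..lam, t ^ (2*j+2) / (1 - t^2) ^ (j+1)) := by
          exact mul_le_mul_of_nonneg_left hInt hcoefpos
    _ ≤ D / (2 ^ (j+1) * F) * (1 - k^2)^(j+1)
        * ∫ t in (0:ℝ)..lam, t ^ (2*j+2) / (1 - t^2) ^ (j+1) := by
          have hratio : (2*(j:ℝ)+1) * (1-k^2) * lam^2 / (2*((j:ℝ)+2) * (1-lam^2)) ≤ 1 := by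
            rw [div_le_one (by positivity)]
            nlinarith [mul_le_mul_of_nonneg_left hkey (show (0:ℝ) ≤ 2*(j:ℝ)+1 by positivity),
              Nat.cast_nonneg (α := ℝ) j]
          have hsplit : (2*(j:ℝ)+1) * D / (2 ^ ((j+1)+1) * (((j:ℝ)+2) * F)) * (1 - k^2)^((j+1)+1) * c
              = ((2*(j:ℝ)+1) * (1-k^2) * lam^2 / (2*((j:ℝ)+2) * (1-lam^2)))
                * (D / (2 ^ (j+1) * F) * (1 - k^2)^(j+1)) := by
            rw [hc]
            rw [pow_succ (1 - k^2), pow_succ (2:ℝ) (j+1)]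
            field_simp
          have hcoef : (2*(j:ℝ)+1) * D / (2 ^ ((j+1)+1) * (((j:ℝ)+2) * F)) * (1 - k^2)^((j+1)+1) * c
              ≤ D / (2 ^ (j+1) * F) * (1 - k^2)^(j+1) := by
            rw [hsplit]
            exact mul_le_of_le_one_left (by positivity) hratio
          nlinarith [mul_le_mul_of_nonneg_right hcoef hI]
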